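/- arXiv:2502.00135 — 2 statements merged into one kernel-verified Lean document; each statement's English description precedes it below -/
import Mathlib

section
/- For every graph G and every tree T with k ≥ 1 edges, ex*(G, T) < (2k-1)·|V(G)|. -/
open SimpleGraph

/-- An edge coloring is proper on `H` if distinct edges of `H` sharing a vertex
receive different colors. -/
def IsProperEdgeColoring {V : Type*} (H : SimpleGraph V) (c : Sym2 V → ℕ) : Prop :=
  ∀ ⦃e₁ : Sym2 V⦄, e₁ ∈ H.edgeSet → ∀ ⦃e₂ : Sym2 V⦄, e₂ ∈ H.edgeSet →
    e₁ ≠ e₂ → (∃ v, v ∈ e₁ ∧ v ∈ e₂) → c e₁ ≠ c e₂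

/-- The graph `H`, edge colored by `c`, contains a rainbow copy of `F`:
there is an (injective) copy of `F` in `H` all of whose edges receive
pairwise distinct colors. -/
def HasRainbowCopy {V W : Type*} (H : SimpleGraph V) (c : Sym2 V → ℕ)
    (F : SimpleGraph W) : Prop :=
  ∃ f : W ↪ V, (∀ ⦃a b : W⦄, F.Adj a b → H.Adj (f a) (f b)) ∧
    ∀ ⦃a b a' b' : W⦄, F.Adj a b → F.Adj a' b' → s(a, b) ≠ s(a', b') →
      c s(f a, f b) ≠ c s(f a', f b')

/-- `H` admits a proper edge coloring with no rainbow copy of `F`. -/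
def RainbowFree {V W : Type*} (H : SimpleGraph V) (F : SimpleGraph W) : Prop :=
  ∃ c : Sym2 V → ℕ, IsProperEdgeColoring H c ∧ ¬ HasRainbowCopy H c F

/-- The rainbow extremal number `ex*(G,F)`: the maximum number of edges of a
subgraph `H` of `G` admitting a proper edge coloring with no rainbow copy of `F`. -/
noncomputable def rainbowExtremalNumber {V W : Type*} [Fintype V]
    (G : SimpleGraph V) (F : SimpleGraph W) : ℕ :=
  sSup {m | ∃ H : SimpleGraph V, H ≤ G ∧ RainbowFree H F ∧ m = H.edgeSet.ncard}

/-- The minimum degree of a subgraph, taken over its own vertex set. -/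
noncomputable def subMinDegree {V : Type*} {G : SimpleGraph V} (H : G.Subgraph) : ℕ :=
  sInf {d | ∃ v ∈ H.verts, d = (H.neighborSet v).ncard}

/-- `δ*(G,F)`: the maximum of the minimum degree over all subgraphs `H` of `G`
admitting a proper edge coloring with no rainbow copy of `F`. -/
noncomputable def rainbowMinDegree {V W : Type*} [Fintype V]
    (G : SimpleGraph V) (F : SimpleGraph W) : ℕ :=
  sSup {m | ∃ H : G.Subgraph, RainbowFree H.spanningCoe F ∧ m = subMinDegree H}

/-- The `n`-dimensional hypercube graph `Q_n`. -/
def cubeGraph (n : ℕ) : SimpleGraph (Fin n → Bool) where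
  Adj x y := {i | x i ≠ y i}.ncard = 1
  symm := by
    constructor
    intro x y h
    beta_reduce at h ⊢
    have hs : {i | y i ≠ x i} = {i | x i ≠ y i} := by ext i; simp [ne_comm]
    rw [hs]; exact h
  loopless := by
    constructor
    intro x h
    simp at h

/-- The star `K_{1,k}` with `k` edges. -/
def starGraph (k : ℕ) : SimpleGraph (Fin (k + 1)) where
  Adj i j := i ≠ j ∧ (i = 0 ∨ j = 0)
  symm := by constructor; intro i j h; exact ⟨h.1.symm, h.2.symm⟩
  loopless := by constructor; intro i h; exact h.1 rfl

/-- `G` contains a copy of `F` as a subgraph. -/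
def ContainsCopy {V W : Type*} (G : SimpleGraph V) (F : SimpleGraph W) : Prop :=
  ∃ f : W ↪ V, ∀ ⦃a b : W⦄, F.Adj a b → G.Adj (f a) (f b)



section AuxRainbow
open Finset
set_option linter.unusedSectionVars false

variable {V : Type*} [Fintype V] [DecidableEq V]




/-- Edges of `H` with both endpoints in `S`. -/
def edgesWithin (H : SimpleGraph V) [DecidableRel H.Adj] (S : Finset V) : Finset (Sym2 V) :=
  H.edgeFinset.filter (fun e => ∀ v ∈ e, v ∈ S)

lemma edgesWithin_empty (H : SimpleGraph V) [DecidableRel H.Adj] :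
    edgesWithin H (∅ : Finset V) = ∅ := by
  ext e
  simp only [edgesWithin, mem_filter, Finset.notMem_empty, iff_false, not_and]
  intro he h
  induction e with
  | _ a b => exact h a (Sym2.mem_mk_left a b)

lemma edgesWithin_card_erase (H : SimpleGraph V) [DecidableRel H.Adj] {S : Finset V} {v : V}
    (hv : v ∈ S) :
    (edgesWithin H S).card
      = (edgesWithin H (S.erase v)).card + (H.neighborFinset v ∩ S).card := by
  classical
  have hsplit := Finset.card_filter_add_card_filter_not
    (s := edgesWithin H S) (p := fun e => v ∈ e)
  have h1 : (edgesWithin H S).filter (fun e => ¬ v ∈ e) = edgesWithin H (S.erase v) := by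
    ext e
    simp only [edgesWithin, mem_filter, Finset.mem_erase, and_assoc]
    constructor
    · rintro ⟨he, hS, hne⟩
      exact ⟨he, fun x hx => ⟨fun h => hne (h ▸ hx), hS x hx⟩⟩
    · rintro ⟨he, hS⟩
      exact ⟨he, fun x hx => (hS x hx).2, fun hve => (hS v hve).1 rfl⟩
  have h2 : (H.neighborFinset v ∩ S).card
      = ((edgesWithin H S).filter (fun e => v ∈ e)).card := by
    apply Finset.card_bij (fun w _ => s(v, w))
    · intro w hw
      simp only [Finset.mem_inter, mem_neighborFinset] at hw
      simp only [edgesWithin, mem_filter, mem_edgeFinset, mem_edgeSet]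
      refine ⟨⟨hw.1, ?_⟩, Sym2.mem_mk_left v w⟩
      intro x hx
      rcases Sym2.mem_iff.mp hx with rfl | rfl
      · exact hv
      · exact hw.2
    · intro w1 h1 w2 h2 heq
      rcases Sym2.eq_iff.mp heq with ⟨_, rfl⟩ | ⟨rfl, rfl⟩ <;> rfl
    · intro e he
      simp only [edgesWithin, mem_filter, mem_edgeFinset, mem_edgeSet] at he
      obtain ⟨⟨hadj, hS⟩, hve⟩ := he
      induction e with
      | _ a b =>
        rcases Sym2.mem_iff.mp hve with rfl | rfl
        · refine ⟨b, ?_, rfl⟩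
          simp only [Finset.mem_inter, mem_neighborFinset]
          exact ⟨(mem_edgeSet H).mp hadj, hS b (Sym2.mem_mk_right _ _)⟩
        · refine ⟨a, ?_, Sym2.eq_swap⟩
          simp only [Finset.mem_inter, mem_neighborFinset]
          exact ⟨((mem_edgeSet H).mp hadj).symm, hS _ (Sym2.mem_mk_left _ _)⟩
  rw [← hsplit, h1, h2, add_comm]

lemma edgesWithin_nonempty_mem {H : SimpleGraph V} [DecidableRel H.Adj] {S : Finset V}
    (h : (edgesWithin H S).Nonempty) : S.Nonempty := by
  obtain ⟨e, he⟩ := h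
  simp only [edgesWithin, mem_filter] at he
  induction e with
  | _ a b => exact ⟨a, he.2 a (Sym2.mem_mk_left a b)⟩

/-- Min-degree subgraph extraction. -/
lemma exists_min_degree_subset (H : SimpleGraph V) [DecidableRel H.Adj] (D : ℕ) :
    ∀ n (S : Finset V), S.card ≤ n → (D - 1) * S.card < (edgesWithin H S).card →
    ∃ S' : Finset V, S'.Nonempty ∧ ∀ v ∈ S', D ≤ (H.neighborFinset v ∩ S').card := by
  intro n
  induction n with
  | zero =>
    intro S hcard hlt
    rw [Finset.card_eq_zero.mp (Nat.le_zero.mp hcard)] at hlt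
    rw [edgesWithin_empty] at hlt
    simp at hlt
  | succ n ih =>
    intro S hcard hlt
    by_cases hall : ∀ v ∈ S, D ≤ (H.neighborFinset v ∩ S).card
    · refine ⟨S, ?_, hall⟩
      apply edgesWithin_nonempty_mem (H := H)
      rw [← Finset.card_pos]
      omega
    · push_neg at hall
      obtain ⟨v, hvS, hvd⟩ := hall
      have hkey := edgesWithin_card_erase H hvS
      have hScard : S.card = (S.erase v).card + 1 := by
        rw [Finset.card_erase_of_mem hvS]
        have : 1 ≤ S.card := Finset.card_pos.mpr ⟨v, hvS⟩
        omega
      apply ih (S.erase v)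
      · omega
      · have hmul : (D - 1) * S.card = (D - 1) * (S.erase v).card + (D - 1) := by
          rw [hScard]; ring
        have hd' : (H.neighborFinset v ∩ S).card ≤ D - 1 := by omega
        omega

end AuxRainbow

section AuxTree
set_option linter.unusedSectionVars false
open Finset
variable {W : Type*} [Fintype W] [DecidableEq W]


/-- A finite tree with at least two vertices has a leaf. -/
lemma tree_exists_leaf (T : SimpleGraph W) [DecidableRel T.Adj] (hT : T.IsTree)
    (h2 : 2 ≤ Fintype.card W) : ∃ w, T.degree w = 1 := by
  classical
  by_contra hno
  push_neg at hno
  have hdeg1 : ∀ w : W, 1 ≤ T.degree w := by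
    intro w
    obtain ⟨u, hu⟩ := Fintype.exists_ne_of_one_lt_card h2 w
    obtain ⟨p⟩ := hT.isConnected.preconnected w u
    have hne : ¬ p.Nil := by
      intro hnil
      exact hu (SimpleGraph.Walk.Nil.eq hnil).symm
    have hadj : T.Adj w (p.getVert 1) := p.adj_snd hne
    rw [← SimpleGraph.card_neighborFinset_eq_degree]
    exact Finset.card_pos.mpr ⟨_, (T.mem_neighborFinset _ _).mpr hadj⟩
  have hdeg2 : ∀ w : W, 2 ≤ T.degree w := by
    intro w
    have := hno w
    have := hdeg1 w
    omega
  have hsum := T.sum_degrees_eq_twice_card_edges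
  have hcard : T.edgeFinset.card + 1 = Fintype.card W := hT.card_edgeFinset
  have hge : 2 * Fintype.card W ≤ ∑ v : W, T.degree v := by
    calc 2 * Fintype.card W = ∑ _v : W, 2 := by
          rw [Finset.sum_const, Finset.card_univ]; ring
      _ ≤ ∑ v : W, T.degree v := Finset.sum_le_sum (fun v _ => hdeg2 v)
  omega

/-- A path between two vertices different from a leaf avoids the leaf. -/
lemma path_avoids_leaf {T : SimpleGraph W} [DecidableRel T.Adj] {w₀ : W}
    (hdeg : T.degree w₀ = 1) {u v : W} (p : T.Walk u v) (hp : p.IsPath)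
    (hu : u ≠ w₀) (hv : v ≠ w₀) : w₀ ∉ p.support := by
  classical
  intro hsup
  set q := p.takeUntil w₀ hsup with hq
  set r := p.dropUntil w₀ hsup with hr
  have hspec : q.append r = p := p.take_spec hsup
  have hqp : q.IsPath := hp.takeUntil hsup
  have hrp : r.IsPath := hp.dropUntil hsup
  have hqnil : ¬ q.Nil := fun h => hu (SimpleGraph.Walk.Nil.eq h)
  have hrnil : ¬ r.Nil := fun h => hv (SimpleGraph.Walk.Nil.eq h).symm
  have hqrnil : ¬ q.reverse.Nil := SimpleGraph.Walk.not_nil_of_ne (Ne.symm hu)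
  set a := q.reverse.getVert 1 with ha
  set b := r.getVert 1 with hb
  have haadj : T.Adj w₀ a := q.reverse.adj_snd hqrnil
  have hbadj : T.Adj w₀ b := r.adj_snd hrnil
  -- a ∈ q.support, b ∈ r.support.tail
  have hamem : a ∈ q.support := by
    have h1 : a ∈ q.reverse.support := by
      rw [SimpleGraph.Walk.mem_support_iff_exists_getVert]
      refine ⟨1, rfl, ?_⟩
      have := SimpleGraph.Walk.not_nil_iff_lt_length.mp hqrnil
      omega
    rwa [SimpleGraph.Walk.support_reverse, List.mem_reverse] at h1
  have hbmem : b ∈ r.support.tail := by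
    have hcons : SimpleGraph.Walk.cons (r.adj_snd hrnil) r.tail = r :=
      r.cons_tail_eq hrnil
    have : b ∈ r.tail.support := SimpleGraph.Walk.start_mem_support _
    rw [← hcons, SimpleGraph.Walk.support_cons]
    simpa using this
  -- nodup of p.support gives disjointness
  have hnd : (q.support ++ r.support.tail).Nodup := by
    rw [← SimpleGraph.Walk.support_append, hspec]
    exact hp.support_nodup
  have hne : a ≠ b := by
    intro h
    exact (List.disjoint_of_nodup_append hnd) hamem (h ▸ hbmem)
  -- two distinct neighbors contradict degree 1
  have h2 : 2 ≤ T.degree w₀ := by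
    rw [← SimpleGraph.card_neighborFinset_eq_degree]
    have : ({a, b} : Finset W) ⊆ T.neighborFinset w₀ := by
      intro x hx
      rcases Finset.mem_insert.mp hx with rfl | hx
      · exact (T.mem_neighborFinset _ _).mpr haadj
      · rw [Finset.mem_singleton] at hx
        exact hx ▸ (T.mem_neighborFinset _ _).mpr hbadj
    calc 2 = ({a, b} : Finset W).card := (Finset.card_pair hne).symm
      _ ≤ _ := Finset.card_le_card this
  omega

/-- Transfer a walk whose support lies in `s` to the induced subgraph. -/
lemma reachable_induce_of_walk {T : SimpleGraph W} {s : Set W} :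
    ∀ {u v : W} (p : T.Walk u v) (hs : ∀ x ∈ p.support, x ∈ s),
    (T.induce s).Reachable ⟨u, hs u p.start_mem_support⟩ ⟨v, hs v p.end_mem_support⟩ := by
  intro u v p
  induction p with
  | nil => intro hs; rfl
  | cons h q ih =>
    intro hs
    have hs' : ∀ x ∈ q.support, x ∈ s := fun x hx => hs x (by
      rw [SimpleGraph.Walk.support_cons]; exact List.mem_cons_of_mem _ hx)
    have hadj : (T.induce s).Adj ⟨_, hs _ (SimpleGraph.Walk.start_mem_support _)⟩
        ⟨_, hs' _ (SimpleGraph.Walk.start_mem_support _)⟩ := by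
      simpa using h
    exact (hadj.reachable).trans (ih hs')

/-- Removing a leaf from a tree yields a tree. -/
lemma induce_compl_leaf_isTree {T : SimpleGraph W} [DecidableRel T.Adj] (hT : T.IsTree)
    {w₀ w₁ : W} (hdeg : T.degree w₀ = 1) (hadj : T.Adj w₀ w₁) :
    (T.induce {x | x ≠ w₀}).IsTree := by
  classical
  constructor
  · -- connected
    have : Nonempty {x | x ≠ w₀} := ⟨⟨w₁, hadj.ne'⟩⟩
    apply SimpleGraph.Connected.mk
    · intro u v
      obtain ⟨p, hp⟩ := (hT.existsUnique_path (u : W) (v : W)).exists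
      have havoid : w₀ ∉ p.support := path_avoids_leaf hdeg p hp u.2 v.2
      have hs : ∀ x ∈ p.support, x ∈ {x | x ≠ w₀} := by
        intro x hx h
        exact havoid (h ▸ hx)
      have := reachable_induce_of_walk p hs
      convert this <;> exact rfl
  · -- acyclic
    intro v c hc
    have := hT.IsAcyclic (c.map (SimpleGraph.Embedding.induce {x | x ≠ w₀}).toHom)
      (hc.map (Subtype.val_injective))
    exact this

end AuxTree

section AuxEmbed
set_option linter.unusedSectionVars false
open Finset

lemma tree_ncard {W : Type*} [Fintype W] (T : SimpleGraph W) (hT : T.IsTree) :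
    T.edgeSet.ncard + 1 = Fintype.card W := by
  classical
  have h := hT.card_edgeFinset
  rwa [Set.ncard_eq_toFinset_card']

lemma rainbow_embed {V : Type*} [Fintype V] [DecidableEq V] (H : SimpleGraph V)
    [DecidableRel H.Adj] (c : Sym2 V → ℕ) (hc : IsProperEdgeColoring H c) (k : ℕ)
    (S : Finset V) (hS : S.Nonempty)
    (hd : ∀ v ∈ S, 2 * k - 1 ≤ (H.neighborFinset v ∩ S).card) :
    ∀ (j : ℕ), j ≤ k → ∀ {W : Type*} [Fintype W] (T : SimpleGraph W),
      T.IsTree → T.edgeSet.ncard = j →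
      ∃ f : W ↪ V, (∀ w, f w ∈ S) ∧ (∀ a b : W, T.Adj a b → H.Adj (f a) (f b)) ∧
        (∀ a b a' b' : W, T.Adj a b → T.Adj a' b' → s(a,b) ≠ s(a',b') →
          c s(f a, f b) ≠ c s(f a', f b')) := by
  intro j
  induction j with
  | zero =>
    intro _ W _ T hT hcard
    have hW : Fintype.card W = 1 := by
      have := tree_ncard T hT
      omega
    have : Subsingleton W := Fintype.card_le_one_iff_subsingleton.mp (by omega)
    obtain ⟨s, hs⟩ := hS
    refine ⟨⟨fun _ => s, fun a b _ => Subsingleton.elim a b⟩, fun _ => hs, ?_, ?_⟩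
    · intro a b hab
      rw [Subsingleton.elim a b] at hab
      exact (T.loopless.irrefl b hab).elim
    · intro a b _ _ hab _ _ _
      rw [Subsingleton.elim a b] at hab
      exact (T.loopless.irrefl b hab).elim
  | succ n ih =>
    intro hnk W _ T hT hcard
    classical
    -- find a leaf
    have hW : Fintype.card W = n + 2 := by
      have := tree_ncard T hT
      omega
    obtain ⟨w₀, hdeg⟩ := tree_exists_leaf T hT (by omega)
    obtain ⟨w₁, hnbr⟩ : ∃ w₁, T.neighborFinset w₀ = {w₁} := by
      apply Finset.card_eq_one.mp
      rwa [T.card_neighborFinset_eq_degree]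
    have hadj01 : T.Adj w₀ w₁ := by
      rw [← T.mem_neighborFinset, hnbr]
      exact Finset.mem_singleton_self w₁
    have hne10 : w₁ ≠ w₀ := hadj01.ne'
    have huniq : ∀ b, T.Adj w₀ b → b = w₁ := by
      intro b hb
      have : b ∈ T.neighborFinset w₀ := (T.mem_neighborFinset _ _).mpr hb
      rw [hnbr] at this
      exact Finset.mem_singleton.mp this
    set T' := T.induce {x | x ≠ w₀} with hT'def
    have hT' : T'.IsTree := induce_compl_leaf_isTree hT hdeg hadj01
    have hW' : Fintype.card {x | x ≠ w₀} = n + 1 := by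
      rw [Set.card_ne_eq]
      omega
    have hcard' : T'.edgeSet.ncard = n := by
      have := tree_ncard T' hT'
      omega
    obtain ⟨f', hf'S, hf'adj, hf'rb⟩ := ih (by omega) T' hT' hcard'
    set x₁ : V := f' ⟨w₁, hne10⟩ with hx₁
    have hx₁S : x₁ ∈ S := hf'S _
    set A : Finset V := H.neighborFinset x₁ ∩ S with hA
    have hAcard : 2 * (n + 1) - 1 ≤ A.card := by
      have := hd x₁ hx₁S
      have h2 : 2 * (n + 1) - 1 ≤ 2 * k - 1 := by omega
      exact le_trans h2 this
    have hAadj : ∀ u ∈ A, H.Adj x₁ u := by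
      intro u hu
      exact (H.mem_neighborFinset _ _).mp (Finset.mem_inter.mp hu).1
    have hAS : ∀ u ∈ A, u ∈ S := fun u hu => (Finset.mem_inter.mp hu).2
    set Bad1 : Finset V := Finset.univ.image (fun w : {x | x ≠ w₀} => f' w) with hBad1
    have hBad1card : Bad1.card = n + 1 := by
      rw [hBad1, Finset.card_image_of_injective _ f'.injective, Finset.card_univ]
      exact hW'
    set Bad2 : Finset V := A.filter
      (fun u0 => ∃ e : {x | x ≠ w₀} × {x | x ≠ w₀},
        T'.Adj e.1 e.2 ∧ c s(f' e.1, f' e.2) = c s(x₁, u0)) with hBad2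
    have hBad2card : Bad2.card ≤ n := by
      have hle : Bad2.card ≤ T'.edgeSet.toFinset.card := by
        apply Finset.card_le_card_of_injOn
          (fun u0 => if h : ∃ e : {x | x ≠ w₀} × {x | x ≠ w₀},
            T'.Adj e.1 e.2 ∧ c s(f' e.1, f' e.2) = c s(x₁, u0)
            then s(h.choose.1, h.choose.2) else s(⟨w₁, hne10⟩, ⟨w₁, hne10⟩))
        · intro u0 hu0
          have hex := (Finset.mem_filter.mp hu0).2
          dsimp only
          rw [Finset.mem_coe, dif_pos hex]
          rw [Set.mem_toFinset, mem_edgeSet]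
          exact hex.choose_spec.1
        · intro u1 hu1 u2 hu2 heq
          rw [Finset.mem_coe, hBad2, Finset.mem_filter] at hu1 hu2
          obtain ⟨hu1A, hex1⟩ := hu1
          obtain ⟨hu2A, hex2⟩ := hu2
          dsimp only at heq
          rw [dif_pos hex1, dif_pos hex2] at heq
          by_contra hneq
          -- colors of the two H-edges at x₁ agree
          have hceq : c s(x₁, u1) = c s(x₁, u2) := by
            obtain ⟨hadj1, hc1⟩ := hex1.choose_spec
            obtain ⟨hadj2, hc2⟩ := hex2.choose_spec
            rw [← hc1, ← hc2]
            rcases Sym2.eq_iff.mp heq with ⟨h1, h2⟩ | ⟨h1, h2⟩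
            · rw [h1, h2]
            · rw [h1, h2, Sym2.eq_swap]
          have he1 : s(x₁, u1) ∈ H.edgeSet := (mem_edgeSet H).mpr (hAadj u1 hu1A)
          have he2 : s(x₁, u2) ∈ H.edgeSet := (mem_edgeSet H).mpr (hAadj u2 hu2A)
          have hedne : s(x₁, u1) ≠ s(x₁, u2) := by
            intro h
            rcases Sym2.eq_iff.mp h with ⟨_, h2⟩ | ⟨h1, h2⟩
            · exact hneq h2
            · exact (hAadj u1 hu1A).ne (h2.symm)
          exact hc he1 he2 hedne ⟨x₁, Sym2.mem_mk_left _ _, Sym2.mem_mk_left _ _⟩ hceq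
      have : T'.edgeSet.toFinset.card = n := by
        rw [← Set.ncard_eq_toFinset_card', hcard']
      omega
    -- find a good vertex u
    have hgood : (A \ (Bad1 ∪ Bad2)).Nonempty := by
      have hsub : A ∩ (Bad1 ∪ Bad2) ⊆ (Bad1.erase x₁) ∪ Bad2 := by
        intro x hx
        obtain ⟨hxA, hxB⟩ := Finset.mem_inter.mp hx
        rcases Finset.mem_union.mp hxB with h | h
        · apply Finset.mem_union_left
          apply Finset.mem_erase.mpr
          exact ⟨(hAadj x hxA).ne', h⟩
        · exact Finset.mem_union_right _ h
      have hinter : (A ∩ (Bad1 ∪ Bad2)).card ≤ 2 * n := by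
        calc (A ∩ (Bad1 ∪ Bad2)).card ≤ ((Bad1.erase x₁) ∪ Bad2).card :=
              Finset.card_le_card hsub
          _ ≤ (Bad1.erase x₁).card + Bad2.card := Finset.card_union_le _ _
          _ ≤ n + n := by
              have h1 : (Bad1.erase x₁).card ≤ n := by
                have hx₁Bad1 : x₁ ∈ Bad1 := by
                  rw [hBad1]
                  exact Finset.mem_image_of_mem _ (Finset.mem_univ _)
                rw [Finset.card_erase_of_mem hx₁Bad1, hBad1card]
                omega
              omega
          _ = 2 * n := by ring
      have : (A \ (Bad1 ∪ Bad2)).card = A.card - (A ∩ (Bad1 ∪ Bad2)).card := by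
        rw [← Finset.sdiff_inter_self_left]
        exact Finset.card_sdiff_of_subset Finset.inter_subset_left
      rw [← Finset.card_pos]
      omega
    obtain ⟨u, hu⟩ := hgood
    have huA : u ∈ A := (Finset.mem_sdiff.mp hu).1
    have huB : u ∉ Bad1 ∪ Bad2 := (Finset.mem_sdiff.mp hu).2
    have huB1 : u ∉ Bad1 := fun h => huB (Finset.mem_union_left _ h)
    have huB2 : u ∉ Bad2 := fun h => huB (Finset.mem_union_right _ h)
    have huNotImg : ∀ w : {x | x ≠ w₀}, f' w ≠ u := by
      intro w h
      exact huB1 (by rw [hBad1, ← h]; exact Finset.mem_image_of_mem _ (Finset.mem_univ _))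
    have huColor : ∀ (a b : {x | x ≠ w₀}), T'.Adj a b → c s(f' a, f' b) ≠ c s(x₁, u) := by
      intro a b hab h
      exact huB2 (Finset.mem_filter.mpr ⟨huA, ⟨(a, b), hab, h⟩⟩)
    -- define the extension
    set f : W → V := fun w => if h : w = w₀ then u else f' ⟨w, h⟩ with hfdef
    have hfw₀ : f w₀ = u := dif_pos rfl
    have hfne : ∀ (w : W) (h : w ≠ w₀), f w = f' ⟨w, h⟩ := fun w h => dif_neg h
    have hfinj : Function.Injective f := by
      intro a b hab
      by_cases ha : a = w₀ <;> by_cases hb : b = w₀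
      · rw [ha, hb]
      · rw [hfne b hb, ha, hfw₀] at hab
        exact absurd hab.symm (huNotImg _)
      · rw [hfne a ha, hb, hfw₀] at hab
        exact absurd hab (huNotImg _)
      · rw [hfne a ha, hfne b hb] at hab
        have := f'.injective hab
        exact congrArg Subtype.val this
    have hfx₁ : f w₁ = x₁ := by rw [hfne w₁ hne10]
    -- edge classification
    have hedge : ∀ a b, T.Adj a b →
        (s(a, b) = s(w₀, w₁) ∧ s(f a, f b) = s(u, x₁)) ∨
        (∃ (ha : a ≠ w₀) (hb : b ≠ w₀), T'.Adj ⟨a, ha⟩ ⟨b, hb⟩ ∧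
          s(f a, f b) = s(f' ⟨a, ha⟩, f' ⟨b, hb⟩)) := by
      intro a b hab
      by_cases ha : a = w₀
      · subst ha
        have hb := huniq b hab
        subst hb
        exact Or.inl ⟨rfl, by rw [hfw₀, hfx₁]⟩
      · by_cases hb : b = w₀
        · subst hb
          have ha' := huniq a hab.symm
          subst ha'
          refine Or.inl ⟨Sym2.eq_swap, ?_⟩
          rw [hfw₀, hfx₁, Sym2.eq_swap]
        · refine Or.inr ⟨ha, hb, ?_, ?_⟩
          · exact hab
          · rw [hfne a ha, hfne b hb]
    refine ⟨⟨f, hfinj⟩, ?_, ?_, ?_⟩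
    · -- image in S
      intro w
      by_cases h : w = w₀
      · rw [Function.Embedding.coeFn_mk, h, hfw₀]
        exact hAS u huA
      · rw [Function.Embedding.coeFn_mk, hfne w h]
        exact hf'S _
    · -- adjacency
      intro a b hab
      rcases hedge a b hab with ⟨_, himg⟩ | ⟨ha, hb, hadj', himg⟩
      · simp only [Function.Embedding.coeFn_mk]
        have : H.Adj u x₁ := (hAadj u huA).symm
        have h2 := Sym2.eq_iff.mp himg
        rcases h2 with ⟨h3, h4⟩ | ⟨h3, h4⟩
        · rw [h3, h4]; exact this
        · rw [h3, h4]; exact this.symm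
      · simp only [Function.Embedding.coeFn_mk]
        rw [hfne a ha, hfne b hb]
        exact hf'adj _ _ hadj'
    · -- rainbow
      intro a b a' b' hab ha'b' hsne
      simp only [Function.Embedding.coeFn_mk]
      rcases hedge a b hab with ⟨hL, hI⟩ | ⟨ha, hb, hadj', hI⟩ <;>
        rcases hedge a' b' ha'b' with ⟨hL', hI'⟩ | ⟨ha', hb', hadj'', hI'⟩
      · exact absurd (hL.trans hL'.symm) hsne
      · rw [hI, hI']
        intro h
        apply huColor _ _ hadj''
        rw [← h, Sym2.eq_swap]
      · rw [hI, hI']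
        intro h
        apply huColor _ _ hadj'
        rw [h, Sym2.eq_swap]
      · rw [hI, hI']
        apply hf'rb _ _ _ _ hadj' hadj''
        intro h
        apply hsne
        rcases Sym2.eq_iff.mp h with ⟨h1, h2⟩ | ⟨h1, h2⟩
        · rw [show a = a' from congrArg Subtype.val h1,
            show b = b' from congrArg Subtype.val h2]
        · rw [show a = b' from congrArg Subtype.val h1,
            show b = a' from congrArg Subtype.val h2, Sym2.eq_swap]


/-- For every graph `G` and every tree `T` with `k ≥ 1` edges,
`ex*(G, T) < (2k-1) · |V(G)|`. -/
theorem stmt8 {V W : Type*} [Fintype V] [Nonempty V] [Fintype W] (G : SimpleGraph V)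
    (T : SimpleGraph W) (hT : T.IsTree) (k : ℕ) (hk : 1 ≤ k)
    (hTk : T.edgeSet.ncard = k) :
    rainbowExtremalNumber G T < (2 * k - 1) * Fintype.card V := by
  classical
  set B := (2 * k - 1) * Fintype.card V with hB
  have hn : 1 ≤ Fintype.card V := Fintype.card_pos
  have hB1 : 1 ≤ B := by
    have h1 : 1 ≤ 2 * k - 1 := by omega
    have := Nat.mul_le_mul h1 hn
    simpa using this
  have hkey : ∀ m ∈ {m | ∃ H : SimpleGraph V, H ≤ G ∧ RainbowFree H T ∧
      m = H.edgeSet.ncard}, m ≤ B - 1 := by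
    rintro m ⟨H, hHG, ⟨c, hc, hno⟩, rfl⟩
    by_contra hgt
    push_neg at hgt
    have hge : B ≤ H.edgeSet.ncard := by omega
    haveI : DecidableRel H.Adj := Classical.decRel _
    have hEc : H.edgeSet.ncard = H.edgeFinset.card := Set.ncard_eq_toFinset_card' _
    have huniv : edgesWithin H (Finset.univ : Finset V) = H.edgeFinset := by
      apply Finset.filter_true_of_mem
      intro e _
      intro v _
      exact Finset.mem_univ v
    have hlt : (2 * k - 1 - 1) * (Finset.univ : Finset V).card
        < (edgesWithin H (Finset.univ : Finset V)).card := by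
      rw [huniv, Finset.card_univ]
      have h3 : (2 * k - 1 - 1) * Fintype.card V
          = (2 * k - 1) * Fintype.card V - Fintype.card V := Nat.sub_one_mul _ _
      have h4 : Fintype.card V ≤ (2 * k - 1) * Fintype.card V :=
        Nat.le_mul_of_pos_left _ (by omega)
      omega
    obtain ⟨S, hSne, hSdeg⟩ := exists_min_degree_subset H (2 * k - 1) (Fintype.card V)
      Finset.univ (by rw [Finset.card_univ]) hlt
    obtain ⟨f, _, hfadj, hfrb⟩ :=
      rainbow_embed H c hc k S hSne hSdeg k le_rfl T hT hTk
    exact hno ⟨f, fun a b hab => hfadj a b hab,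
      fun a b a' b' h1 h2 h3 => hfrb a b a' b' h1 h2 h3⟩
  have h0 : (0 : ℕ) ∈ {m | ∃ H : SimpleGraph V, H ≤ G ∧ RainbowFree H T ∧
      m = H.edgeSet.ncard} := by
    refine ⟨⊥, bot_le, ⟨fun _ => 0, ?_, ?_⟩, by simp⟩
    · intro e₁ he₁
      simp only [SimpleGraph.edgeSet_bot, Set.mem_empty_iff_false] at he₁
    · rintro ⟨f, hadj, -⟩
      have hne : T.edgeSet.Nonempty := by
        apply Set.nonempty_of_ncard_ne_zero
        omega
      obtain ⟨e, he⟩ := hne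
      induction e with
      | _ a b =>
        have : T.Adj a b := (T.mem_edgeSet).mp he
        exact (hadj this).elim
  have hsup : rainbowExtremalNumber G T ≤ B - 1 := csSup_le ⟨0, h0⟩ hkey
  omega
end AuxEmbed
end

section
/- Let r ≥ 3, let T be a tree with k edges with leaf-ordering x_0, x_1, ..., x_k (where x_{i'} denotes the unique earlier neighbor of x_i), and let G be a K_{2,r}-free graph with minimum degree δ(G) > 2k + r - 3 equipped with a proper edge coloring. Then for every vertex v_0 of G there exist distinct vertices v_1, v_2, ..., v_k of G, all distinct from v_0, such that: (1) whenever x_i x_j is an edge of T, v_i v_j is an edge of G; (2) the k edges v_{i'} v_i for 1 ≤ i ≤ k receive pairwise distinct colors; and (3) for 1 ≤ i ≤ k, the vertex v_i is adjacent to v_0 in G if and only if x_i is adjacent to x_0 in T. -/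
open SimpleGraph

lemma color_inj {V : Type*} {G : SimpleGraph V} {c : Sym2 V → ℕ}
    (hc : IsProperEdgeColoring G c)
    {u w1 w2 : V} (h1 : G.Adj u w1) (h2 : G.Adj u w2) (hne : w1 ≠ w2) :
    c s(u, w1) ≠ c s(u, w2) :=
  hc (G.mem_edgeSet.2 h1) (G.mem_edgeSet.2 h2)
    (fun h => hne (Sym2.congr_right.mp h)) ⟨u, by simp, by simp⟩

lemma k2r_bound {V : Type*} [Fintype V] {G : SimpleGraph V} {r : ℕ} (hr : 1 ≤ r)
    (hG : ¬ ContainsCopy G (completeBipartiteGraph (Fin 2) (Fin r)))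
    {u w : V} (huw : u ≠ w) :
    (G.neighborSet u ∩ G.neighborSet w).ncard ≤ r - 1 := by
  by_contra hcon
  push_neg at hcon
  have hrle : r ≤ (G.neighborSet u ∩ G.neighborSet w).ncard := by omega
  obtain ⟨t, hts, htcard⟩ := Set.exists_subset_card_eq hrle
  have htf : t.Finite := Set.toFinite t
  haveI := htf.fintype
  have hcard : Fintype.card t = r := by
    rw [← Set.toFinset_card, ← Set.ncard_eq_toFinset_card']; exact htcard
  set e := Fintype.equivFinOfCardEq hcard with he
  set g : Fin r → V := fun j => (e.symm j : V) with hg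
  have hgmem : ∀ j, g j ∈ G.neighborSet u ∩ G.neighborSet w := fun j => hts (e.symm j).2
  have hginj : Function.Injective g := fun a b hab => by
    have : (e.symm a : t) = e.symm b := Subtype.ext hab
    simpa using congrArg e this
  have hgu : ∀ j, g j ≠ u := fun j h => G.irrefl (h ▸ (hgmem j).1)
  have hgw : ∀ j, g j ≠ w := fun j h => G.irrefl (h ▸ (hgmem j).2)
  apply hG
  refine ⟨⟨Sum.elim (fun a => if a = 0 then u else w) g, ?_⟩, ?_⟩
  · rintro (a | a) (b | b) hab
    · fin_cases a <;> fin_cases b <;> simp_all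
    · exfalso
      simp only [Sum.elim_inl, Sum.elim_inr] at hab
      split_ifs at hab
      exacts [(hgu b) hab.symm, (hgw b) hab.symm]
    · exfalso
      simp only [Sum.elim_inl, Sum.elim_inr] at hab
      split_ifs at hab
      exacts [(hgu a) hab, (hgw a) hab]
    · simp only [Sum.elim_inr] at hab
      exact congrArg Sum.inr (hginj hab)
  · rintro (a | a) (b | b) hab <;>
      simp only [completeBipartiteGraph, Sum.isLeft_inl, Sum.isRight_inr, Sum.isRight_inl,
        Sum.isLeft_inr, Bool.true_and, Bool.and_true, Bool.false_and, Bool.and_false,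
        Function.Embedding.coeFn_mk, Sum.elim_inl, Sum.elim_inr] at hab ⊢
    · simp at hab
    · change G.Adj (if a = 0 then u else w) (g b)
      split_ifs
      exacts [(hgmem b).1, (hgmem b).2]
    · change G.Adj (g a) (if b = 0 then u else w)
      split_ifs
      exacts [((hgmem a).1).symm, ((hgmem a).2).symm]
    · simp at hab

theorem key_lemma {V : Type*} [Fintype V] (r k : ℕ) (hr : 3 ≤ r)
    (p : Fin (k + 1) → Fin (k + 1))
    (hpl : ∀ i : Fin (k + 1), 0 < i.val → p i < i)
    (G : SimpleGraph V)
    (hG : ¬ ContainsCopy G (completeBipartiteGraph (Fin 2) (Fin r)))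
    (hδ : ∀ u : V, 2 * k + r - 3 < (G.neighborSet u).ncard)
    (c : Sym2 V → ℕ)
    (hc : IsProperEdgeColoring G c)
    (v0 : V) :
    ∀ n, n ≤ k → ∃ v : Fin (k + 1) → V, v 0 = v0 ∧
      (∀ i j : Fin (k + 1), i.val ≤ n → j.val ≤ n → v i = v j → i = j) ∧
      (∀ i : Fin (k + 1), 0 < i.val → i.val ≤ n → G.Adj (v (p i)) (v i)) ∧
      (∀ i j : Fin (k + 1), 0 < i.val → 0 < j.val → i.val ≤ n → j.val ≤ n → i ≠ j →
        c s(v (p i), v i) ≠ c s(v (p j), v j)) ∧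
      (∀ i : Fin (k + 1), 0 < i.val → i.val ≤ n → (G.Adj v0 (v i) ↔ p i = 0)) := by
  intro n
  induction n with
  | zero =>
    intro _
    refine ⟨fun _ => v0, rfl, ?_, ?_, ?_, ?_⟩
    · intro i j hi hj _
      exact Fin.ext (by omega)
    · intro i hi hi'; omega
    · intro i j hi hj hi' hj'; omega
    · intro i hi hi'; omega
  | succ n ih =>
    intro hn1
    obtain ⟨v, hv0, hinj, hadj, hcol, hiff⟩ := ih (by omega)
    set i : Fin (k + 1) := ⟨n + 1, by omega⟩ with hidef
    have hival : i.val = n + 1 := rfl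
    have hi0 : 0 < i.val := by omega
    have hpi : (p i).val ≤ n := by
      have := hpl i hi0
      rw [Fin.lt_def] at this
      omega
    have hpine : p i ≠ i := by
      intro h; rw [Fin.ext_iff] at h; omega
    set vp : V := v (p i) with hvp
    set N : Set V := G.neighborSet vp with hN
    set A : Set V := v '' {j : Fin (k+1) | j.val ≤ n} with hA
    set Colors : Set ℕ := (fun j => c s(v (p j), v j)) '' {j : Fin (k+1) | 0 < j.val ∧ j.val ≤ n}
      with hColors
    set B : Set V := {u : V | c s(vp, u) ∈ Colors} with hB
    set C : Set V := {u : V | p i ≠ 0 ∧ G.Adj v0 u} with hC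
    -- cardinality bounds
    have hIio : ∀ m : ℕ, (Set.Iio m : Set ℕ).ncard = m := by
      intro m; rw [← Finset.coe_Iio, Set.ncard_coe_finset, Nat.card_Iio]
    have hidx1 : ({j : Fin (k+1) | j.val ≤ n} : Set (Fin (k+1))).ncard ≤ n + 1 := by
      have h : ({j : Fin (k+1) | j.val ≤ n} : Set (Fin (k+1))).ncard
          ≤ (Set.Iio (n+1) : Set ℕ).ncard := by
        apply Set.ncard_le_ncard_of_injOn (fun j => j.val)
        · intro a ha
          simp only [Set.mem_setOf_eq] at ha
          simp only [Set.mem_Iio]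
          omega
        · intro a _ b _ hab; exact Fin.ext hab
      rw [hIio] at h; exact h
    have hidx2 : ({j : Fin (k+1) | 0 < j.val ∧ j.val ≤ n} : Set (Fin (k+1))).ncard ≤ n := by
      have h : ({j : Fin (k+1) | 0 < j.val ∧ j.val ≤ n} : Set (Fin (k+1))).ncard
          ≤ (Set.Iio n : Set ℕ).ncard := by
        apply Set.ncard_le_ncard_of_injOn (fun j => j.val - 1)
        · intro a ha
          simp only [Set.mem_setOf_eq] at ha
          simp only [Set.mem_Iio]
          omega
        · intro a ha b hb hab
          simp only [Set.mem_setOf_eq] at ha hb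
          have hab' : a.val - 1 = b.val - 1 := hab
          exact Fin.ext (by omega)
      rw [hIio] at h; exact h
    have hAcard : (N ∩ A).ncard ≤ n := by
      have hsub : N ∩ A ⊆ A \ {vp} := by
        rintro u ⟨hu1, hu2⟩
        refine ⟨hu2, ?_⟩
        intro h
        rw [Set.mem_singleton_iff] at h
        subst h
        exact G.irrefl hu1
      have hvpA : vp ∈ A := ⟨p i, hpi, rfl⟩
      have h1 : (A \ {vp}).ncard = A.ncard - 1 :=
        Set.ncard_diff_singleton_of_mem hvpA
      have h2 : A.ncard ≤ n + 1 := le_trans (Set.ncard_image_le (Set.toFinite _)) hidx1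
      have := Set.ncard_le_ncard hsub (Set.toFinite _)
      omega
    have hBcard : (N ∩ B).ncard ≤ n := by
      have h1 : (N ∩ B).ncard ≤ Colors.ncard := by
        apply Set.ncard_le_ncard_of_injOn (fun u => c s(vp, u))
        · rintro u ⟨_, hu⟩; exact hu
        · intro a ha b hb hab
          by_contra hne
          exact color_inj hc ha.1 hb.1 hne hab
      have h2 : Colors.ncard ≤ n := le_trans (Set.ncard_image_le (Set.toFinite _)) hidx2
      omega
    have hCcard : (N ∩ C).ncard ≤ r - 1 := by
      by_cases hp0 : p i = 0
      · have : N ∩ C = ∅ := by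
          ext u; simp [hC, hp0]
        rw [this, Set.ncard_empty]; omega
      · have hvpv0 : vp ≠ v0 := by
          intro h
          apply hp0
          refine hinj (p i) 0 hpi (by simp) ?_
          rw [← hvp, h, hv0]
        have hsub : N ∩ C ⊆ G.neighborSet vp ∩ G.neighborSet v0 := by
          rintro u ⟨hu1, _, hu2⟩
          exact ⟨hu1, hu2⟩
        exact le_trans (Set.ncard_le_ncard hsub (Set.toFinite _))
          (k2r_bound (by omega) hG hvpv0)
    -- find a good vertex
    have hgood : (N \ (A ∪ B ∪ C)).Nonempty := by
      rw [Set.nonempty_iff_ne_empty]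
      intro hemp
      have hsub : N ⊆ A ∪ B ∪ C := by
        intro u hu
        by_contra h
        exact (Set.eq_empty_iff_forall_notMem.mp hemp u) ⟨hu, h⟩
      have : N = (N ∩ A) ∪ (N ∩ B) ∪ (N ∩ C) := by
        rw [← Set.inter_union_distrib_left, ← Set.inter_union_distrib_left]
        exact (Set.inter_eq_left.mpr hsub).symm
      have hle : N.ncard ≤ (N ∩ A).ncard + (N ∩ B).ncard + (N ∩ C).ncard := by
        calc N.ncard = ((N ∩ A) ∪ (N ∩ B) ∪ (N ∩ C)).ncard := by rw [← this]
        _ ≤ ((N ∩ A) ∪ (N ∩ B)).ncard + (N ∩ C).ncard := Set.ncard_union_le _ _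
        _ ≤ (N ∩ A).ncard + (N ∩ B).ncard + (N ∩ C).ncard := by
            have := Set.ncard_union_le (N ∩ A) (N ∩ B)
            omega
      have hNbig : 2 * k + r - 3 < N.ncard := hδ vp
      omega
    obtain ⟨w, hwN, hwbad⟩ := hgood
    have hwA : w ∉ A := fun h => hwbad (Or.inl (Or.inl h))
    have hwB : w ∉ B := fun h => hwbad (Or.inl (Or.inr h))
    have hwC : w ∉ C := fun h => hwbad (Or.inr h)
    set v' : Fin (k+1) → V := Function.update v i w with hv'
    have hup : ∀ j : Fin (k+1), j ≠ i → v' j = v j := fun j hj =>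
      Function.update_of_ne hj w v
    have hupi : v' i = w := Function.update_self i w v
    have hle_ne : ∀ j : Fin (k+1), j.val ≤ n → j ≠ i := by
      intro j hj h; rw [h, hival] at hj; omega
    have hch : ∀ j : Fin (k+1), j.val ≤ n + 1 → j ≠ i → j.val ≤ n := by
      intro j hj hne
      rcases Nat.lt_or_ge j.val (n+1) with h | h
      · omega
      · exact absurd (Fin.ext (by omega ) : j = i) hne
    have hpj_le : ∀ j : Fin (k+1), 0 < j.val → j.val ≤ n → (p j).val ≤ n := by
      intro j hj0 hjn
      have := hpl j hj0; rw [Fin.lt_def] at this; omega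
    refine ⟨v', ?_, ?_, ?_, ?_, ?_⟩
    · rw [hup 0 (hle_ne 0 (by simp)), hv0]
    · -- injectivity
      intro a b ha hb hab
      by_cases hai : a = i <;> by_cases hbi : b = i
      · rw [hai, hbi]
      · exfalso
        rw [hai, hupi, hup b hbi] at hab
        exact hwA ⟨b, hch b hb hbi, hab.symm⟩
      · exfalso
        rw [hbi, hupi, hup a hai] at hab
        exact hwA ⟨a, hch a ha hai, hab⟩
      · exact hinj a b (hch a ha hai) (hch b hb hbi) (by rwa [hup a hai, hup b hbi] at hab)
    · -- adjacency
      intro j hj0 hjn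
      by_cases hji : j = i
      · rw [hji, hupi, hup (p i) hpine]
        exact hwN
      · have hjn' := hch j hjn hji
        rw [hup j hji, hup (p j) (hle_ne (p j) (hpj_le j hj0 hjn'))]
        exact hadj j hj0 hjn'
    · -- colors
      intro a b ha0 hb0 ha hb hab
      by_cases hai : a = i <;> by_cases hbi : b = i
      · exact absurd (hai.trans hbi.symm) hab
      · subst hai
        have hbn := hch b hb hbi
        rw [hupi, hup (p i) hpine, hup b hbi, hup (p b) (hle_ne (p b) (hpj_le b hb0 hbn))]
        intro h
        exact hwB ⟨b, ⟨hb0, hbn⟩, h.symm⟩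
      · subst hbi
        have han := hch a ha hai
        rw [hupi, hup (p i) hpine, hup a hai, hup (p a) (hle_ne (p a) (hpj_le a ha0 han))]
        intro h
        exact hwB ⟨a, ⟨ha0, han⟩, h⟩
      · have han := hch a ha hai
        have hbn := hch b hb hbi
        rw [hup a hai, hup b hbi, hup (p a) (hle_ne (p a) (hpj_le a ha0 han)),
          hup (p b) (hle_ne (p b) (hpj_le b hb0 hbn))]
        exact hcol a b ha0 hb0 han hbn hab
    · -- iff
      intro j hj0 hjn
      by_cases hji : j = i
      · subst hji
        rw [hupi]
        constructor
        · intro h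
          by_contra hp0
          exact hwC ⟨hp0, h⟩
        · intro h
          have : vp = v0 := by rw [hvp, h, hv0]
          rw [← this]
          exact hwN
      · have hjn' := hch j hjn hji
        rw [hup j hji]
        exact hiff j hj0 hjn'
/-- Let `r ≥ 3`, let `T` be a tree with `k` edges with leaf-ordering
`x₀,…,x_k` (with `x_{i'} = x (p i)` the unique earlier neighbor of `xᵢ`), and let
`G` be a `K_{2,r}`-free properly edge-colored graph with minimum degree
`> 2k + r - 3`. Then for every vertex `v₀` there are distinct vertices
`v₁,…,v_k`, all distinct from `v₀`, such that: (1) edges of `T` map to edges of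
`G`; (2) the `k` image edges receive pairwise distinct colors; (3) `vᵢ` is
adjacent to `v₀` iff `xᵢ` is adjacent to `x₀`. -/
theorem stmt19 {V W : Type*} [Fintype V] [Fintype W] (r k : ℕ) (hr : 3 ≤ r)
    (T : SimpleGraph W) (hT : T.IsTree) (hTk : T.edgeSet.ncard = k)
    (x : Fin (k + 1) → W) (hx : Function.Bijective x)
    (p : Fin (k + 1) → Fin (k + 1))
    (hp : ∀ i : Fin (k + 1), 0 < i.val → p i < i ∧ T.Adj (x (p i)) (x i))
    (hpu : ∀ i j : Fin (k + 1), 0 < i.val → j < i → T.Adj (x j) (x i) → j = p i)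
    (G : SimpleGraph V)
    (hG : ¬ ContainsCopy G (completeBipartiteGraph (Fin 2) (Fin r)))
    (hδ : ∀ u : V, 2 * k + r - 3 < (G.neighborSet u).ncard)
    (c : Sym2 V → ℕ) (hc : IsProperEdgeColoring G c) (v0 : V) :
    ∃ v : Fin (k + 1) → V, v 0 = v0 ∧ Function.Injective v ∧
      (∀ i j : Fin (k + 1), T.Adj (x i) (x j) → G.Adj (v i) (v j)) ∧
      (∀ i j : Fin (k + 1), 0 < i.val → 0 < j.val → i ≠ j →
        c s(v (p i), v i) ≠ c s(v (p j), v j)) ∧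
      (∀ i : Fin (k + 1), 0 < i.val → (G.Adj v0 (v i) ↔ T.Adj (x 0) (x i))) := by
  obtain ⟨v, hv0, hinj, hadjv, hcol, hiff⟩ :=
    key_lemma r k hr p (fun i hi => (hp i hi).1) G hG hδ c hc v0 k (le_refl k)
  have hvalk : ∀ a : Fin (k+1), a.val ≤ k := fun a => by omega
  refine ⟨v, hv0, ?_, ?_, ?_, ?_⟩
  · intro a b hab
    exact hinj a b (hvalk a) (hvalk b) hab
  · intro a b hadjT
    have hne : a ≠ b := fun h => T.loopless.irrefl _ (h ▸ hadjT)
    rcases lt_or_gt_of_ne hne with h | h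
    · have hb0 : 0 < b.val := by
        have := Fin.lt_def.mp h; omega
      have heq := hpu b a hb0 h hadjT
      have h2 := hadjv b hb0 (hvalk b)
      rw [← heq] at h2
      exact h2
    · have ha0 : 0 < a.val := by
        have := Fin.lt_def.mp h; omega
      have heq := hpu a b ha0 h hadjT.symm
      have h2 := hadjv a ha0 (hvalk a)
      rw [← heq] at h2
      exact h2.symm
  · intro a b ha hb hne
    exact hcol a b ha hb (hvalk a) (hvalk b) hne
  · intro a ha
    rw [hiff a ha (hvalk a)]
    constructor
    · intro h
      have := (hp a ha).2
      rw [h] at this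
      exact this
    · intro h
      have h0a : (0 : Fin (k+1)) < a := by
        rw [Fin.lt_def]
        simpa using ha
      exact (hpu a 0 ha h0a h).symm
end
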